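/- In the braid group B_5, the word σ1 σ2⁻¹ σ1 σ2 σ3 σ4⁻¹ σ3 σ4⁻¹ σ3 σ4 σ2 σ4 σ2 σ3⁻¹ (a braid representative of the knot 12n79) equals the product of the positive bands of its band decomposition with band centers {1, 3, 7, 9, 11, 13}; in particular, this braid is quasipositive. -/

import Mathlib

/-- The Artin relations for the braid group with `m` generators
`σ_1, …, σ_m` (indexed by `Fin m`), i.e. the braid group `B_{m+1}`:
`σ_i σ_j = σ_j σ_i` for `|i - j| ≥ 2`, and
`σ_i σ_{i+1} σ_i = σ_{i+1} σ_i σ_{i+1}`. -/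
def braidRels (m : ℕ) : Set (FreeGroup (Fin m)) :=
  { r | (∃ i j : Fin m, (i : ℕ) + 2 ≤ (j : ℕ) ∧
          r = FreeGroup.of i * FreeGroup.of j * (FreeGroup.of i)⁻¹ * (FreeGroup.of j)⁻¹) ∨
        (∃ i j : Fin m, (i : ℕ) + 1 = (j : ℕ) ∧
          r = FreeGroup.of i * FreeGroup.of j * FreeGroup.of i *
              (FreeGroup.of j)⁻¹ * (FreeGroup.of i)⁻¹ * (FreeGroup.of j)⁻¹) }

/-- The braid group `B_{m+1}`, presented with `m` Artin generators.
Here index `i : Fin m` corresponds to the Artin generator `σ_{i+1}`. -/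
abbrev BraidGrp (m : ℕ) := PresentedGroup (braidRels m)

/-- The Artin generator `σ_{i+1}` of the braid group `B_{m+1}`. -/
def σ {m : ℕ} (i : Fin m) : BraidGrp m := PresentedGroup.of i

/-- A letter of a braid word: a generator index together with a sign
(`true` = the positive generator, `false` = its inverse). -/
abbrev Letter (m : ℕ) := Fin m × Bool

/-- The group element represented by a letter. -/
def letterEl {m : ℕ} (x : Letter m) : BraidGrp m :=
  if x.2 then σ x.1 else (σ x.1)⁻¹

/-- The group element represented by a braid word. -/
def wordProd {m : ℕ} (w : List (Letter m)) : BraidGrp m :=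
  (w.map letterEl).prod

/-- The band of the band decomposition of the word `w` with band centers `S`
(1-based positions) at center `p`: namely `α_p * x_p * α_p⁻¹`, where `x_p` is
the letter of `w` at position `p` and `α_p` is the product, in increasing
order of position, of the letters of `w` at positions `q < p` with `q ∉ S`. -/
def band {m : ℕ} (w : List (Letter m)) (S : List ℕ) (p : ℕ) : BraidGrp m :=
  let α : BraidGrp m :=
    wordProd (((w.zipIdx.map Prod.swap).filter fun qx => decide (qx.1 + 1 < p ∧ qx.1 + 1 ∉ S)).map Prod.snd)
  match w[p - 1]? with
  | some x => α * letterEl x * α⁻¹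
  | none => 1

/-- The product, in increasing order of band center, of the bands of the
band decomposition of the word `w` with band centers `S`. -/
def bandProd {m : ℕ} (w : List (Letter m)) (S : List ℕ) : BraidGrp m :=
  (S.map (band w S)).prod

/-- A positive band in the braid group: a conjugate `α σ_j α⁻¹` of a generator. -/
def IsPositiveBand {m : ℕ} (x : BraidGrp m) : Prop :=
  ∃ (α : BraidGrp m) (j : Fin m), x = α * σ j * α⁻¹

/-- A braid is quasipositive if it is a product of positive bands. -/
def IsQuasipositive {m : ℕ} (x : BraidGrp m) : Prop :=
  ∃ l : List (BraidGrp m), (∀ b ∈ l, IsPositiveBand b) ∧ x = l.prod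

/-- A negative band in the braid group: a conjugate `α σ_j⁻¹ α⁻¹` of the
inverse of a generator. -/
def IsNegativeBand {m : ℕ} (x : BraidGrp m) : Prop :=
  ∃ (α : BraidGrp m) (j : Fin m), x = α * (σ j)⁻¹ * α⁻¹

/-- A braid is quasinegative if it is a product of negative bands. -/
def IsQuasinegative {m : ℕ} (x : BraidGrp m) : Prop :=
  ∃ l : List (BraidGrp m), (∀ b ∈ l, IsNegativeBand b) ∧ x = l.prod

/-- The braid word for the knot `12n79` (letter `(i, true)` is `σ_(i+1)`,
`(i, false)` is `σ_(i+1)⁻¹`). -/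
def theWord : List (Letter 4) :=
  [(0, true), (1, false), (0, true), (1, true), (2, true), (3, false), (2, true), (3, false), (2, true), (3, true), (1, true), (3, true), (1, true), (2, false)]

/-- The band centers. -/
def theCenters : List ℕ := [1, 3, 7, 9, 11, 13]

/-- The braid representative of `12n79` equals the product of the bands of its
band decomposition with the given band centers; in particular it is quasipositive. -/
theorem knot_12n79_quasipositive :
    wordProd theWord = bandProd theWord theCenters ∧
      IsQuasipositive (wordProd theWord) := by
  have b1 : band theWord theCenters 1 =
      wordProd [] * σ 0 * (wordProd [])⁻¹ := rfl
  have b3 : band theWord theCenters 3 =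
      wordProd [(1,false)] * σ 0 * (wordProd [(1,false)])⁻¹ := rfl
  have b7 : band theWord theCenters 7 =
      wordProd [(1,false),(1,true),(2,true),(3,false)] * σ 2 *
        (wordProd [(1,false),(1,true),(2,true),(3,false)])⁻¹ := rfl
  have b9 : band theWord theCenters 9 =
      wordProd [(1,false),(1,true),(2,true),(3,false),(3,false)] * σ 2 *
        (wordProd [(1,false),(1,true),(2,true),(3,false),(3,false)])⁻¹ := rfl
  have b11 : band theWord theCenters 11 =
      wordProd [(1,false),(1,true),(2,true),(3,false),(3,false),(3,true)] * σ 1 *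
        (wordProd [(1,false),(1,true),(2,true),(3,false),(3,false),(3,true)])⁻¹ := rfl
  have b13 : band theWord theCenters 13 =
      wordProd [(1,false),(1,true),(2,true),(3,false),(3,false),(3,true),(3,true)] * σ 1 *
        (wordProd [(1,false),(1,true),(2,true),(3,false),(3,false),(3,true),(3,true)])⁻¹ := rfl
  have h : wordProd theWord = bandProd theWord theCenters := by
    have hb : bandProd theWord theCenters =
        band theWord theCenters 1 * (band theWord theCenters 3 *
          (band theWord theCenters 7 * (band theWord theCenters 9 *
            (band theWord theCenters 11 * (band theWord theCenters 13 * 1))))) := rfl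
    rw [hb, b1, b3, b7, b9, b11, b13]
    simp only [wordProd, theWord, letterEl, List.map_cons, List.map_nil,
      List.prod_cons, List.prod_nil, if_true, Bool.false_eq_true, if_false]
    group
  refine ⟨h, [band theWord theCenters 1, band theWord theCenters 3,
    band theWord theCenters 7, band theWord theCenters 9,
    band theWord theCenters 11, band theWord theCenters 13], ?_, h⟩
  intro b hb
  simp only [List.mem_cons, List.not_mem_nil, or_false] at hb
  rcases hb with rfl | rfl | rfl | rfl | rfl | rfl
  · exact ⟨_, 0, b1⟩
  · exact ⟨_, 0, b3⟩
  · exact ⟨_, 2, b7⟩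
  · exact ⟨_, 2, b9⟩
  · exact ⟨_, 1, b11⟩
  · exact ⟨_, 1, b13⟩
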